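/- Let G be a finite bipartite simple graph whose edges can be oriented so that each vertex has indegree at most k, i.e., there is an assignment of a head endpoint to every edge such that every vertex is the head of at most k edges. Suppose each vertex v is assigned a list L(v) of k + 1 distinct real numbers, and let q : V(G) → ℝ be an arbitrary function. Then there is a coloring f of the vertices with f(v) ∈ L(v) for every vertex v, such that q(u) + Σ_{x ∈ N(u)} f(x) ≠ q(v) + Σ_{x ∈ N(v)} f(x) for every pair of adjacent vertices u and v. -/

import Mathlib

/-- The sum of the values of `f` over the neighborhood of `u` in `G`. -/
noncomputable def nsum {V : Type*} [Fintype V] {M : Type*} [AddCommMonoid M]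
    (G : SimpleGraph V) (f : V → M) (u : V) : M :=
  letI := Classical.decRel G.Adj
  ∑ x ∈ G.neighborFinset u, f x

lemma nsum_eq {V : Type*} [Fintype V] (G : SimpleGraph V) [DecidableRel G.Adj]
    (f : V → ℝ) (u : V) : nsum G f u = ∑ x ∈ G.neighborFinset u, f x := by
  unfold nsum
  apply Finset.sum_congr _ fun _ _ => rfl
  congr!

open MvPolynomial Finset

namespace CNaux

variable {V : Type*} [DecidableEq V]

/-- geometric cofactor: `(X i - C a) * geom i a m = X i ^ m - C (a ^ m)`. -/
noncomputable def geom (i : V) (a : ℝ) (m : ℕ) : MvPolynomial V ℝ :=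
  ∑ j ∈ Finset.range m, X i ^ j * C (a ^ (m - 1 - j))

lemma geom_succ (i : V) (a : ℝ) (m : ℕ) :
    geom i a (m + 1) = X i * geom i a m + C (a ^ m) := by
  rw [geom, Finset.sum_range_succ', geom, Finset.mul_sum]
  congr 1
  · refine Finset.sum_congr rfl fun j hj => ?_
    have h : m + 1 - 1 - (j + 1) = m - 1 - j := by omega
    rw [h, pow_succ']
    ring
  · simp

lemma geom_mul (i : V) (a : ℝ) (m : ℕ) :
    (X i - C a) * geom i a m = X i ^ m - C (a ^ m) := by
  induction m with
  | zero => simp [geom]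
  | succ n ih =>
    rw [geom_succ, mul_add, show (X i - C a) * (X i * geom i a n)
        = X i * ((X i - C a) * geom i a n) by ring, ih]
    have h1 : (C (a ^ (n + 1)) : MvPolynomial V ℝ) = C a * C (a ^ n) := by
      rw [← C_mul, ← pow_succ']
    rw [pow_succ, h1]
    ring

lemma geom_deg (i : V) (a : ℝ) (m : ℕ) : (geom i a m).totalDegree ≤ m - 1 := by
  refine (totalDegree_finset_sum _ _).trans (Finset.sup_le fun j hj => ?_)
  refine (totalDegree_mul _ _).trans ?_
  rw [totalDegree_X_pow, totalDegree_C]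
  have := Finset.mem_range.mp hj
  omega

lemma degsum (t : V →₀ ℕ) : (∑ i ∈ t.support, t i) = t.sum fun _ e => e := rfl

/-- Division with remainder by `X i - C a`, with degree control. -/
lemma decomp (P : MvPolynomial V ℝ) (i : V) (a : ℝ) :
    ∃ Q R : MvPolynomial V ℝ, P = (X i - C a) * Q + R ∧
      Q.totalDegree ≤ P.totalDegree - 1 ∧ ∀ t : V →₀ ℕ, t i ≠ 0 → coeff t R = 0 := by
  refine ⟨∑ μ ∈ P.support, monomial (μ.erase i) (coeff μ P) * geom i a (μ i),
    ∑ μ ∈ P.support, monomial (μ.erase i) (coeff μ P * a ^ (μ i)), ?_, ?_, ?_⟩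
  · conv_lhs => rw [P.as_sum]
    rw [Finset.mul_sum, ← Finset.sum_add_distrib]
    refine Finset.sum_congr rfl fun μ hμ => ?_
    have e1 : (X i - C a) * ((monomial (μ.erase i)) (coeff μ P) * geom i a (μ i))
        = (monomial (μ.erase i)) (coeff μ P) * (X i ^ (μ i) - C (a ^ (μ i))) := by
      rw [← geom_mul]; ring
    rw [e1, mul_sub, X_pow_eq_monomial, monomial_mul, mul_one, Finsupp.erase_add_single,
      mul_comm ((monomial (μ.erase i)) (coeff μ P)) (C (a ^ μ i)), C_mul_monomial,
      mul_comm (a ^ μ i) (coeff μ P), sub_add_cancel]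
  · refine (totalDegree_finset_sum _ _).trans (Finset.sup_le fun μ hμ => ?_)
    rcases Nat.eq_zero_or_pos (μ i) with h0 | hpos
    · simp [h0, geom]
    refine (totalDegree_mul _ _).trans ?_
    have h1 : ((μ.erase i).sum fun _ e => e) + μ i = μ.sum fun _ e => e := by
      conv_rhs => rw [← Finsupp.erase_add_single i μ]
      rw [Finsupp.sum_add_index' (fun _ => rfl) fun _ _ _ => rfl,
        Finsupp.sum_single_index rfl]
    have h2 : (μ.sum fun _ e => e) ≤ P.totalDegree := le_totalDegree hμ
    have h3 := geom_deg i a (μ i)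
    have h4 := totalDegree_monomial_le (μ.erase i) (coeff μ P)
    simp only [Function.id_def] at h4
    omega
  · intro t ht
    rw [coeff_sum]
    refine Finset.sum_eq_zero fun μ hμ => ?_
    rw [coeff_monomial, if_neg]
    intro h
    apply ht
    rw [← h]
    exact Finsupp.erase_same

lemma eval_indep (R : MvPolynomial V ℝ) (i : V)
    (h : ∀ t : V →₀ ℕ, t i ≠ 0 → coeff t R = 0) (x : V → ℝ) (a : ℝ) :
    eval (Function.update x i a) R = eval x R := by
  rw [eval_eq, eval_eq]
  refine Finset.sum_congr rfl fun d hd => ?_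
  have hdi : d i = 0 := by
    by_contra h'
    exact (mem_support_iff.mp hd) (h d h')
  congr 1
  refine Finset.prod_congr rfl fun j hj => ?_
  have hji : j ≠ i := by
    rintro rfl
    exact (Finsupp.mem_support_iff.mp hj) hdi
  rw [Function.update_of_ne hji]


variable [Fintype V]

lemma degsum' (t : V →₀ ℕ) : (t.sum fun _ e => e) = ∑ v : V, t v := by
  rw [Finsupp.sum_fintype]
  exact fun _ => rfl

lemma vanish : ∀ (n : ℕ) (P : MvPolynomial V ℝ) (t : V →₀ ℕ) (S : V → Finset ℝ),
    P.totalDegree ≤ n → (∑ v : V, t v) = n → (∀ v, t v < (S v).card) →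
    (∀ x : V → ℝ, (∀ v, x v ∈ S v) → eval x P = 0) → coeff t P = 0 := by
  intro n
  induction n using Nat.strong_induction_on with
  | _ n IH =>
  intro P t S hdeg hsum hcard hvan
  have hne : ∀ v, ∃ r, r ∈ S v := fun v =>
    Finset.card_pos.mp (lt_of_le_of_lt (Nat.zero_le _) (hcard v)) |>.imp fun r h => h
  choose x0 hx0 using hne
  rcases Nat.eq_zero_or_pos n with h0 | hpos
  · subst h0
    have ht0 : t = 0 := by
      ext v
      have := Finset.sum_eq_zero_iff.mp hsum v (mem_univ v)
      simpa using this
    subst ht0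
    have hP : P.totalDegree = 0 := Nat.le_zero.mp hdeg
    by_contra hc0
    have hsupp : P.support = {0} := by
      apply Finset.eq_singleton_iff_unique_mem.mpr
      refine ⟨mem_support_iff.mpr hc0, fun d hd => ?_⟩
      have hdd : (d.sum fun _ e => e) = 0 :=
        le_antisymm (hP ▸ le_totalDegree hd) (Nat.zero_le _)
      rw [degsum'] at hdd
      ext v
      simpa using Finset.sum_eq_zero_iff.mp hdd v (mem_univ v)
    have hev := hvan x0 hx0
    rw [eval_eq, hsupp] at hev
    simp only [Finset.sum_singleton, Finsupp.support_zero, Finset.prod_empty, mul_one] at hev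
    exact hc0 hev
  · -- pick i with t i ≠ 0
    have hex : ∃ i, t i ≠ 0 := by
      by_contra h
      push_neg at h
      rw [Finset.sum_eq_zero (fun v _ => h v)] at hsum
      omega
    obtain ⟨i, hti⟩ := hex
    set a := x0 i with ha
    obtain ⟨Q, R, hPQR, hQdeg, hR⟩ := decomp P i a
    -- Q vanishes on the reduced grid
    have hvanQ : ∀ x : V → ℝ, (∀ v, x v ∈ Function.update S i ((S i).erase a) v) →
        eval x Q = 0 := by
      intro x hx
      have hxi : x i ∈ (S i).erase a := by simpa using hx i
      have hxia : x i ≠ a := (Finset.mem_erase.mp hxi).1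
      have hxiS : x i ∈ S i := (Finset.mem_erase.mp hxi).2
      have hxS : ∀ v, x v ∈ S v := by
        intro v
        rcases eq_or_ne v i with rfl | hvi
        · exact hxiS
        · simpa [Function.update_of_ne hvi] using hx v
      have h1 : eval x P = 0 := hvan x hxS
      have h2 : eval (Function.update x i a) P = 0 := by
        refine hvan _ fun v => ?_
        rcases eq_or_ne v i with rfl | hvi
        · simpa using hx0 v
        · simpa [Function.update_of_ne hvi] using hxS v
      have hevalR : eval x R = 0 := by
        have := congrArg (eval (Function.update x i a)) hPQR
        rw [h2] at this
        simp only [map_add, map_mul, map_sub, eval_X, eval_C, Function.update_self] at this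
        rw [eval_indep R i hR x a] at this
        linarith [this]
      have h3 := congrArg (eval x) hPQR
      rw [h1] at h3
      simp only [map_add, map_mul, map_sub, eval_X, eval_C, hevalR, add_zero] at h3
      rcases mul_eq_zero.mp h3.symm with h | h
      · exact absurd (sub_eq_zero.mp h) hxia
      · exact h
    have hQ0 : coeff (t - Finsupp.single i 1) Q = 0 := by
      refine IH (n - 1) (by omega) Q _ _ (by omega) ?_ ?_ hvanQ
      · have e1 : ∑ v : V, t v = (∑ v ∈ Finset.univ.erase i, t v) + t i :=
          (Finset.sum_erase_add _ _ (mem_univ i)).symm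
        have e2 : ∑ v : V, (t - Finsupp.single i 1 : V →₀ ℕ) v
            = (∑ v ∈ Finset.univ.erase i, t v) + (t i - 1) := by
          rw [← Finset.sum_erase_add _ _ (mem_univ i)]
          congr 1
          · refine Finset.sum_congr rfl fun v hv => ?_
            rw [Finsupp.tsub_apply, Finsupp.single_apply,
              if_neg (Ne.symm (Finset.mem_erase.mp hv).1)]
            omega
          · rw [Finsupp.tsub_apply, Finsupp.single_apply, if_pos rfl]
        omega
      · intro v
        rcases eq_or_ne v i with rfl | hvi
        · rw [Finsupp.tsub_apply, Finsupp.single_apply, if_pos rfl,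
            Function.update_self, Finset.card_erase_of_mem (hx0 v)]
          have := hcard v
          omega
        · rw [Finsupp.tsub_apply, Finsupp.single_apply, if_neg (Ne.symm hvi),
            Function.update_of_ne hvi]
          have := hcard v
          omega
    have hQt : coeff t Q = 0 := by
      apply coeff_eq_zero_of_totalDegree_lt
      rw [degsum, degsum', hsum]
      omega
    rw [hPQR, coeff_add, hR t hti, add_zero, sub_mul, coeff_sub,
      coeff_X_mul' t i Q, if_pos (Finsupp.mem_support_iff.mpr hti), hQ0,
      coeff_C_mul, hQt, mul_zero, sub_zero]

theorem CN (P : MvPolynomial V ℝ) (t : V →₀ ℕ) (S : V → Finset ℝ)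
    (hdeg : P.totalDegree ≤ ∑ v : V, t v) (hcard : ∀ v, t v < (S v).card)
    (hcoeff : coeff t P ≠ 0) :
    ∃ x : V → ℝ, (∀ v, x v ∈ S v) ∧ eval x P ≠ 0 := by
  by_contra h
  push_neg at h
  exact hcoeff (vanish _ P t S hdeg rfl hcard h)


section Key

variable {ι : Type*} [DecidableEq ι] (S : ι → Finset V) (c : ι → ℝ) (ch : ι → V)

noncomputable def factor (e : ι) : MvPolynomial V ℝ := C (c e) + ∑ x ∈ S e, X x

lemma factor_deg (e : ι) : (factor S c e).totalDegree ≤ 1 := by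
  refine (totalDegree_add _ _).trans (max_le (by simp [totalDegree_C]) ?_)
  refine (totalDegree_finset_sum _ _).trans (Finset.sup_le fun x _ => ?_)
  rw [totalDegree_X]

lemma prod_deg (E : Finset ι) : (∏ e ∈ E, factor S c e).totalDegree ≤ E.card := by
  refine (totalDegree_finset_prod _ _).trans ?_
  calc ∑ e ∈ E, (factor S c e).totalDegree ≤ ∑ e ∈ E, 1 :=
        Finset.sum_le_sum fun e _ => factor_deg S c e
    _ = E.card := by simp

lemma Dsum (E : Finset ι) :
    ∑ v : V, (∑ e ∈ E, Finsupp.single (ch e) 1 : V →₀ ℕ) v = E.card := by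
  have : ∀ v : V, (∑ e ∈ E, Finsupp.single (ch e) 1 : V →₀ ℕ) v
      = ∑ e ∈ E, if ch e = v then 1 else 0 := by
    intro v
    rw [Finset.sum_apply']
    exact Finset.sum_congr rfl fun e _ => Finsupp.single_apply
  simp_rw [this]
  rw [Finset.sum_comm]
  calc ∑ e ∈ E, ∑ v : V, (if ch e = v then 1 else 0)
      = ∑ e ∈ E, 1 := Finset.sum_congr rfl fun e _ => by simp
    _ = E.card := by simp

lemma count (E : Finset ι) (hch : ∀ e ∈ E, ch e ∈ S e) :
    (∀ t : V →₀ ℕ, (∑ v : V, t v) = E.card → 0 ≤ coeff t (∏ e ∈ E, factor S c e)) ∧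
    1 ≤ coeff (∑ e ∈ E, Finsupp.single (ch e) 1) (∏ e ∈ E, factor S c e) := by
  induction E using Finset.cons_induction with
  | empty =>
    constructor
    · intro t ht
      have ht0 : t = 0 := by
        ext v
        simpa using Finset.sum_eq_zero_iff.mp (by simpa using ht) v (mem_univ v)
      simp [ht0, MvPolynomial.coeff_one]
    · simp [MvPolynomial.coeff_one]
  | cons e₀ E he₀ IH =>
    have hch' : ∀ e ∈ E, ch e ∈ S e := fun e he => hch e (Finset.mem_cons_of_mem he)
    obtain ⟨IH1, IH2⟩ := IH hch'
    have hPdeg := prod_deg S c E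
    have key : ∀ t : V →₀ ℕ, (∑ v : V, t v) = E.card + 1 →
        coeff t (∏ e ∈ Finset.cons e₀ E he₀, factor S c e)
          = ∑ x ∈ S e₀, (if x ∈ t.support
              then coeff (t - Finsupp.single x 1) (∏ e ∈ E, factor S c e) else 0) := by
      intro t ht
      rw [Finset.prod_cons]
      have : factor S c e₀ * ∏ e ∈ E, factor S c e
          = C (c e₀) * ∏ e ∈ E, factor S c e
            + ∑ x ∈ S e₀, X x * ∏ e ∈ E, factor S c e := by
        rw [factor, add_mul, Finset.sum_mul]
      rw [this, coeff_add, coeff_C_mul, coeff_sum]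
      have hzero : coeff t (∏ e ∈ E, factor S c e) = 0 := by
        apply coeff_eq_zero_of_totalDegree_lt
        rw [degsum, degsum', ht]
        omega
      rw [hzero, mul_zero, zero_add]
      exact Finset.sum_congr rfl fun x _ => coeff_X_mul' t x _
    have hsub : ∀ (t : V →₀ ℕ) (x : V), x ∈ t.support → (∑ v : V, t v) = E.card + 1 →
        (∑ v : V, (t - Finsupp.single x 1 : V →₀ ℕ) v) = E.card := by
      intro t x hx ht
      have e1 : ∑ v : V, t v = (∑ v ∈ Finset.univ.erase x, t v) + t x :=
        (Finset.sum_erase_add _ _ (mem_univ x)).symm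
      have e2 : ∑ v : V, (t - Finsupp.single x 1 : V →₀ ℕ) v
          = (∑ v ∈ Finset.univ.erase x, t v) + (t x - 1) := by
        rw [← Finset.sum_erase_add _ _ (mem_univ x)]
        congr 1
        · refine Finset.sum_congr rfl fun v hv => ?_
          rw [Finsupp.tsub_apply, Finsupp.single_apply,
            if_neg (Ne.symm (Finset.mem_erase.mp hv).1)]
          omega
        · rw [Finsupp.tsub_apply, Finsupp.single_apply, if_pos rfl]
      have hx1 : t x ≠ 0 := Finsupp.mem_support_iff.mp hx
      omega
    constructor
    · intro t ht
      rw [Finset.card_cons] at ht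
      rw [key t ht]
      refine Finset.sum_nonneg fun x hx => ?_
      split_ifs with h
      · exact IH1 _ (hsub t x h ht)
      · exact le_refl 0
    · set D : V →₀ ℕ := ∑ e ∈ Finset.cons e₀ E he₀, Finsupp.single (ch e) 1 with hD
      have hDsum : (∑ v : V, D v) = E.card + 1 := by
        rw [hD, Dsum ch (Finset.cons e₀ E he₀), Finset.card_cons]
      have hDmem : ch e₀ ∈ D.support := by
        rw [Finsupp.mem_support_iff, hD, Finset.sum_cons]
        intro h
        have : (1 : ℕ) ≤ (Finsupp.single (ch e₀) 1 + ∑ e ∈ E, Finsupp.single (ch e) 1 : V →₀ ℕ) (ch e₀) := by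
          rw [Finsupp.add_apply, Finsupp.single_apply, if_pos rfl]
          omega
        omega
      rw [key D hDsum]
      have hDsub : D - Finsupp.single (ch e₀) 1 = ∑ e ∈ E, Finsupp.single (ch e) 1 := by
        rw [hD, Finset.sum_cons, add_tsub_cancel_left]
      refine le_trans ?_ (Finset.single_le_sum (f := fun x =>
          (if x ∈ D.support then coeff (D - Finsupp.single x 1) (∏ e ∈ E, factor S c e) else 0))
          (fun x hx => ?_) (hch e₀ (Finset.mem_cons_self e₀ E)))
      · rw [if_pos hDmem, hDsub]
        exact IH2
      · split_ifs with h
        · exact IH1 _ (hsub D x h hDsum)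
        · exact le_refl 0

lemma keylemma (E : Finset ι) (hch : ∀ e ∈ E, ch e ∈ S e) (L : V → Finset ℝ)
    (hcard : ∀ v : V, (E.filter fun e => ch e = v).card < (L v).card) :
    ∃ g : V → ℝ, (∀ v, g v ∈ L v) ∧ ∀ e ∈ E, c e + ∑ x ∈ S e, g x ≠ 0 := by
  set D : V →₀ ℕ := ∑ e ∈ E, Finsupp.single (ch e) 1 with hD
  have hDv : ∀ v, D v = (E.filter fun e => ch e = v).card := by
    intro v
    rw [hD, Finset.sum_apply', Finset.card_filter]
    exact Finset.sum_congr rfl fun e _ => Finsupp.single_apply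
  obtain ⟨g, hg, hev⟩ := CN (∏ e ∈ E, factor S c e) D L
    (by rw [Dsum]; exact prod_deg S c E)
    (fun v => by rw [hDv]; exact hcard v)
    (by
      have := (count S c ch E hch).2
      intro h
      rw [← hD] at this
      rw [h] at this
      norm_num at this)
  refine ⟨g, hg, fun e he => ?_⟩
  intro h
  apply hev
  rw [map_prod]
  refine Finset.prod_eq_zero he ?_
  rw [factor, map_add, eval_C, map_sum]
  simpa using h

end Key
end CNaux



open MvPolynomial Finset

/-- Let `G` be a finite bipartite simple graph whose edges can be oriented (a head
endpoint is chosen for every edge) so that every vertex has indegree at most `k`.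
If every vertex `v` carries a list `L v` of `k + 1` distinct reals and `q` is any
real-valued function on the vertices, then there is a choice `f v ∈ L v` such that
`q u + Σ_{x ∈ N(u)} f x ≠ q v + Σ_{x ∈ N(v)} f x` for all adjacent `u`, `v`. -/
theorem additive_choice_from_lists_bipartite
    {V : Type*} [Fintype V] [DecidableEq V] (G : SimpleGraph V) [DecidableRel G.Adj]
    (hbip : G.Colorable 2) (k : ℕ)
    (hor : ∃ ori : Sym2 V → V, (∀ e ∈ G.edgeSet, ori e ∈ e) ∧
      ∀ v : V, (G.edgeFinset.filter fun e => ori e = v).card ≤ k)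
    (L : V → Finset ℝ) (hL : ∀ v, (L v).card = k + 1) (q : V → ℝ) :
    ∃ f : V → ℝ, (∀ v, f v ∈ L v) ∧
      ∀ ⦃u v : V⦄, G.Adj u v → q u + nsum G f u ≠ q v + nsum G f v := by
  classical
  obtain ⟨ori, hori, hindeg⟩ := hor
  obtain ⟨Col⟩ := hbip
  have htwo : ∀ c d : Fin 2, c ≠ d → d ≠ 0 → c = 0 := by decide
  set ε : V → ℝ := fun v => if Col v = 0 then 1 else -1 with hε
  have hε2 : ∀ v, ε v * ε v = 1 := by
    intro v
    by_cases h : Col v = 0 <;> simp [hε, h]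
  have hεne : ∀ v, ε v ≠ 0 := by
    intro v
    by_cases h : Col v = 0 <;> simp [hε, h]
  set Sf : Sym2 V → Finset V := Sym2.lift
    ⟨fun u v => G.neighborFinset u ∪ G.neighborFinset v,
     fun u v => Finset.union_comm _ _⟩ with hSf
  set cf : Sym2 V → ℝ := Sym2.lift
    ⟨fun u v => if Col u = 0 ∧ Col v ≠ 0 then q v - q u
        else if Col v = 0 ∧ Col u ≠ 0 then q u - q v else 0,
     fun u v => by
      by_cases h1 : Col u = 0 <;> by_cases h2 : Col v = 0 <;> simp [h1, h2]⟩ with hcf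
  obtain ⟨g, hgL, hgne⟩ := CNaux.keylemma Sf cf ori G.edgeFinset
    (by
      intro e he
      induction e with
      | _ u v =>
        have hadj : G.Adj u v := by
          rw [SimpleGraph.mem_edgeFinset, SimpleGraph.mem_edgeSet] at he
          exact he
        have hm := hori _ (SimpleGraph.mem_edgeFinset.mp he)
        rw [Sym2.mem_iff] at hm
        rw [hSf, Sym2.lift_mk]
        rcases hm with h | h
        · rw [h]
          exact Finset.mem_union_right _ ((SimpleGraph.mem_neighborFinset _ _ _).mpr hadj.symm)
        · rw [h]
          exact Finset.mem_union_left _ ((SimpleGraph.mem_neighborFinset _ _ _).mpr hadj))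
    (fun v => (L v).image fun r => ε v * r)
    (by
      intro v
      rw [Finset.card_image_of_injective _ (mul_right_injective₀ (hεne v)), hL]
      exact Nat.lt_succ_of_le (hindeg v))
  set f : V → ℝ := fun v => ε v * g v with hf
  have hfL : ∀ v, f v ∈ L v := by
    intro v
    obtain ⟨r, hr, hrg⟩ := Finset.mem_image.mp (hgL v)
    rw [hf]
    dsimp only
    rw [← hrg, ← mul_assoc, hε2, one_mul]
    exact hr
  refine ⟨f, hfL, ?_⟩
  have hmain : ∀ u v : V, G.Adj u v → Col u = 0 →
      q u + nsum G f u ≠ q v + nsum G f v := by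
    intro u v hadj hcu
    have hcv : Col v ≠ 0 := by
      intro h
      exact Col.valid hadj (by rw [hcu, h])
    have hNu : ∀ x ∈ G.neighborFinset u, Col x ≠ 0 := by
      intro x hx
      have : G.Adj u x := (SimpleGraph.mem_neighborFinset _ _ _).mp hx
      intro h0
      exact Col.valid this (by rw [hcu, h0])
    have hNv : ∀ x ∈ G.neighborFinset v, Col x = 0 := by
      intro x hx
      have hadj' : G.Adj v x := (SimpleGraph.mem_neighborFinset _ _ _).mp hx
      exact htwo _ _ (Col.valid hadj').symm hcv
    have hdisj : Disjoint (G.neighborFinset u) (G.neighborFinset v) := by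
      rw [Finset.disjoint_left]
      intro x hxu hxv
      exact hNu x hxu (hNv x hxv)
    have hedge : s(u, v) ∈ G.edgeFinset := SimpleGraph.mem_edgeFinset.mpr hadj
    have hne := hgne _ hedge
    have hcfe : cf s(u, v) = q v - q u := by
      rw [hcf, Sym2.lift_mk]
      dsimp only
      rw [if_pos ⟨hcu, hcv⟩]
    have hSfe : Sf s(u, v) = G.neighborFinset u ∪ G.neighborFinset v := by
      rw [hSf, Sym2.lift_mk]
    rw [hcfe, hSfe, Finset.sum_union hdisj] at hne
    have hu : nsum G f u = -∑ x ∈ G.neighborFinset u, g x := by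
      rw [nsum_eq, ← Finset.sum_neg_distrib]
      refine Finset.sum_congr rfl fun x hx => ?_
      simp only [hf, hε]
      rw [if_neg (hNu x hx)]
      ring
    have hv : nsum G f v = ∑ x ∈ G.neighborFinset v, g x := by
      rw [nsum_eq]
      refine Finset.sum_congr rfl fun x hx => ?_
      simp only [hf, hε]
      rw [if_pos (hNv x hx)]
      ring
    rw [hu, hv]
    intro heq
    apply hne
    linarith
  intro u v hadj
  by_cases hcu : Col u = 0
  · exact hmain u v hadj hcu
  · have hcv : Col v = 0 := htwo _ _ (Col.valid hadj).symm hcu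
    exact (hmain v u hadj.symm hcv).symm
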